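/- Under the DAN (Polyak adaptive Newton) iteration, the sequence ‖∇f(x_k)‖ is monotonically non-increasing, i.e. ‖∇f(x_{k+1})‖ ≤ ‖∇f(x_k)‖ for all k ≥ 0, and the sequence (x_k) converges to the unique minimizer x⋆ of f. -/

import Mathlib

open Filter Topology intervalIntegral MeasureTheory

lemma dan_line_deriv {E : Type*} [NormedAddCommGroup E] [NormedSpace ℝ E]
    (a b : E) (t : ℝ) : HasDerivAt (fun t : ℝ => a + t • (b - a)) (b - a) t := by
  have h := ((hasDerivAt_id t).smul_const (b - a)).const_add a
  simpa using h

lemma dan_ftc {E : Type*} [NormedAddCommGroup E] [InnerProductSpace ℝ E] [CompleteSpace E]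
    (G : E → E) (H : E → E →L[ℝ] E)
    (hG : ∀ y, HasFDerivAt G (H y) y) (hH : Continuous H) (a b : E) :
    ∫ t in (0:ℝ)..1, H (a + t • (b - a)) (b - a) = G b - G a := by
  have hcont : Continuous fun t : ℝ => H (a + t • (b - a)) (b - a) :=
    (hH.comp (by continuity)).clm_apply continuous_const
  have hderiv : ∀ t ∈ Set.uIcc (0:ℝ) 1,
      HasDerivAt (fun t : ℝ => G (a + t • (b - a))) (H (a + t • (b - a)) (b - a)) t := by
    intro t _
    exact (hG _).comp_hasDerivAt t (dan_line_deriv a b t)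
  have := intervalIntegral.integral_eq_sub_of_hasDerivAt hderiv (hcont.intervalIntegrable 0 1)
  simpa using this

lemma dan_taylor {E : Type*} [NormedAddCommGroup E] [InnerProductSpace ℝ E] [CompleteSpace E]
    (G : E → E) (H : E → E →L[ℝ] E) (L : ℝ) (hL : 0 ≤ L)
    (hG : ∀ y, HasFDerivAt G (H y) y)
    (hlip : ∀ x y, ‖H x - H y‖ ≤ L * ‖x - y‖) (a b : E) :
    ‖G b - G a - H a (b - a)‖ ≤ L / 2 * ‖b - a‖ ^ 2 := by
  have hH : Continuous H := by
    have : LipschitzWith L.toNNReal H := by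
      apply LipschitzWith.of_dist_le_mul
      intro x y
      rw [dist_eq_norm, dist_eq_norm, Real.coe_toNNReal L hL]
      exact hlip x y
    exact this.continuous
  have hcont : Continuous fun t : ℝ => H (a + t • (b - a)) (b - a) :=
    (hH.comp (by continuity)).clm_apply continuous_const
  have key : G b - G a - H a (b - a)
      = ∫ t in (0:ℝ)..1, (H (a + t • (b - a)) (b - a) - H a (b - a)) := by
    rw [intervalIntegral.integral_sub (hcont.intervalIntegrable 0 1)
      (intervalIntegrable_const), dan_ftc G H hG hH a b]
    simp
  rw [key]
  have hb : ∀ᵐ t ∂(volume.restrict (Set.uIoc (0:ℝ) 1)),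
      ‖H (a + t • (b - a)) (b - a) - H a (b - a)‖ ≤ L * ‖b - a‖ ^ 2 * t := by
    filter_upwards [ae_restrict_mem measurableSet_uIoc] with t ht
    have ht0 : 0 ≤ t := by
      rw [Set.uIoc_of_le (by norm_num : (0:ℝ) ≤ 1)] at ht
      exact le_of_lt ht.1
    calc ‖H (a + t • (b - a)) (b - a) - H a (b - a)‖
        = ‖(H (a + t • (b - a)) - H a) (b - a)‖ := by simp
      _ ≤ ‖H (a + t • (b - a)) - H a‖ * ‖b - a‖ := ContinuousLinearMap.le_opNorm _ _
      _ ≤ (L * ‖t • (b - a)‖) * ‖b - a‖ := by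
          apply mul_le_mul_of_nonneg_right _ (norm_nonneg _)
          simpa using hlip (a + t • (b - a)) a
      _ = L * ‖b - a‖ ^ 2 * t := by
          rw [norm_smul, Real.norm_eq_abs, abs_of_nonneg ht0]; ring
  have hgint : IntervalIntegrable (fun t : ℝ => L * ‖b - a‖ ^ 2 * t) volume 0 1 :=
    (by continuity : Continuous fun t : ℝ => L * ‖b - a‖ ^ 2 * t).intervalIntegrable 0 1
  have := intervalIntegral.norm_integral_le_abs_of_norm_le hb hgint
  have hval : ∫ t in (0:ℝ)..1, L * ‖b - a‖ ^ 2 * t = L / 2 * ‖b - a‖ ^ 2 := by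
    rw [intervalIntegral.integral_const_mul, integral_id]; ring
  rw [hval] at this
  calc ‖_‖ ≤ |L / 2 * ‖b - a‖ ^ 2| := this
    _ = L / 2 * ‖b - a‖ ^ 2 := abs_of_nonneg (by positivity)

lemma dan_strong_mono {E : Type*} [NormedAddCommGroup E] [InnerProductSpace ℝ E] [CompleteSpace E]
    (G : E → E) (H : E → E →L[ℝ] E) (μ : ℝ)
    (hG : ∀ y, HasFDerivAt G (H y) y) (hH : Continuous H)
    (hstrong : ∀ x v, μ * ‖v‖ ^ 2 ≤ (inner ℝ (H x v) v : ℝ)) (a b : E) :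
    μ * ‖b - a‖ ^ 2 ≤ (inner ℝ (G b - G a) (b - a) : ℝ) := by
  have hcont : Continuous fun t : ℝ => H (a + t • (b - a)) (b - a) :=
    (hH.comp (by continuity)).clm_apply continuous_const
  have key : (inner ℝ (G b - G a) (b - a) : ℝ)
      = ∫ t in (0:ℝ)..1, (inner ℝ (H (a + t • (b - a)) (b - a)) (b - a) : ℝ) := by
    rw [real_inner_comm, ← dan_ftc G H hG hH a b]
    have h := (innerSL ℝ (b - a)).intervalIntegral_comp_comm (μ := volume)
      (hcont.intervalIntegrable 0 1)
    simp only [innerSL_apply_apply] at h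
    rw [← h]
    congr 1
    ext t
    rw [real_inner_comm]
  rw [key]
  have : μ * ‖b - a‖ ^ 2 = ∫ t in (0:ℝ)..1, (μ * ‖b - a‖ ^ 2) := by simp
  rw [this]
  apply intervalIntegral.integral_mono_on (by norm_num) intervalIntegrable_const
  · exact ((hcont.inner continuous_const)).intervalIntegrable 0 1
  · intro t _
    exact hstrong _ _

set_option maxHeartbeats 1600000 in
theorem dan_monotone_and_convergence (p : ℕ) (hp : 1 ≤ p)
    (f : EuclideanSpace ℝ (Fin p) → ℝ) (hf : ContDiff ℝ 2 f)
    (μ L : ℝ) (hμ : 0 < μ) (hL : 0 < L)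
    (hstrong : ∀ x v : EuclideanSpace ℝ (Fin p),
      μ * ‖v‖ ^ 2 ≤ inner ℝ (fderiv ℝ (gradient f) x v) v)
    (hlip : ∀ x y : EuclideanSpace ℝ (Fin p),
      ‖fderiv ℝ (gradient f) x - fderiv ℝ (gradient f) y‖ ≤ L * ‖x - y‖)
    (xs : EuclideanSpace ℝ (Fin p)) (hxs : gradient f xs = 0)
    (x : ℕ → EuclideanSpace ℝ (Fin p)) (α : ℕ → ℝ)
    (hα : ∀ k, α k = min 1 (μ ^ 2 / (L * ‖gradient f (x k)‖)))
    (hupd : ∀ k, fderiv ℝ (gradient f) (x k) (x (k + 1) - x k)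
      = -(α k) • gradient f (x k)) :
    (∀ k, ‖gradient f (x (k + 1))‖ ≤ ‖gradient f (x k)‖) ∧
    Tendsto x atTop (nhds xs) := by
  have hGC : ContDiff ℝ 1 (gradient f) :=
    ((InnerProductSpace.toDual ℝ _).symm.contDiff).comp (hf.fderiv_right (le_refl _))
  set G := gradient f with hGdef
  set H := fderiv ℝ G with hHdef
  have hGd : ∀ y, HasFDerivAt G (H y) y := fun y =>
    (hGC.differentiable one_ne_zero y).hasFDerivAt
  have hHc : Continuous H := by
    have : LipschitzWith L.toNNReal H := by
      apply LipschitzWith.of_dist_le_mul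
      intro a b
      rw [dist_eq_norm, dist_eq_norm, Real.coe_toNNReal L hL.le]
      exact hlip a b
    exact this.continuous
  have taylor := fun a b => dan_taylor G H L hL.le hGd hlip a b
  have smono := fun a b => dan_strong_mono G H μ hGd hHc hstrong a b
  have hg0 : ∀ k, (0:ℝ) ≤ ‖G (x k)‖ := fun k => norm_nonneg _
  have hα0 : ∀ k, 0 ≤ α k := by
    intro k; rw [hα k]
    exact le_min one_pos.le (div_nonneg (by positivity) (by positivity))
  have hα1 : ∀ k, α k ≤ 1 := fun k => (hα k) ▸ min_le_left _ _
  have hαLg : ∀ k, α k * (L * ‖G (x k)‖) ≤ μ ^ 2 := by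
    intro k
    rcases eq_or_lt_of_le (hg0 k) with h | h
    · rw [← h]; simp; positivity
    · have h2 : α k ≤ μ ^ 2 / (L * ‖G (x k)‖) := (hα k) ▸ min_le_right _ _
      have h3 : 0 < L * ‖G (x k)‖ := by positivity
      calc α k * (L * ‖G (x k)‖) ≤ μ ^ 2 / (L * ‖G (x k)‖) * (L * ‖G (x k)‖) :=
            mul_le_mul_of_nonneg_right h2 h3.le
        _ = μ ^ 2 := div_mul_cancel₀ _ h3.ne'
  -- step-size bound on the displacement
  have hd : ∀ k, μ * ‖x (k + 1) - x k‖ ≤ α k * ‖G (x k)‖ := by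
    intro k
    have h1 := hstrong (x k) (x (k + 1) - x k)
    rw [hupd k] at h1
    rw [real_inner_smul_left] at h1
    have h2 := abs_real_inner_le_norm (G (x k)) (x (k + 1) - x k)
    have h3 := neg_abs_le (inner ℝ (G (x k)) (x (k + 1) - x k) : ℝ)
    have h4 : μ * ‖x (k + 1) - x k‖ ^ 2 ≤ α k * ‖G (x k)‖ * ‖x (k + 1) - x k‖ := by
      nlinarith [hα0 k]
    rcases eq_or_lt_of_le (norm_nonneg (x (k + 1) - x k)) with h | h
    · rw [← h, mul_zero]; exact mul_nonneg (hα0 k) (hg0 k)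
    · nlinarith
  -- the key one-step estimate
  have step : ∀ k, ‖G (x (k + 1))‖ ≤ (1 - α k / 2) * ‖G (x k)‖ := by
    intro k
    have T := taylor (x k) (x (k + 1))
    rw [hupd k] at T
    have heq : G (x (k + 1)) - G (x k) - (-(α k) • G (x k))
        = G (x (k + 1)) - (1 - α k) • G (x k) := by
      module
    rw [heq] at T
    have h4 : ‖G (x (k + 1))‖
        ≤ ‖(1 - α k) • G (x k)‖ + L / 2 * ‖x (k + 1) - x k‖ ^ 2 := by
      have := norm_sub_norm_le (G (x (k + 1))) ((1 - α k) • G (x k))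
      linarith
    rw [norm_smul, Real.norm_eq_abs, abs_of_nonneg (by linarith [hα1 k])] at h4
    have h5 : (μ * ‖x (k + 1) - x k‖) * (μ * ‖x (k + 1) - x k‖)
        ≤ (α k * ‖G (x k)‖) * (α k * ‖G (x k)‖) :=
      mul_le_mul (hd k) (hd k) (mul_nonneg hμ.le (norm_nonneg _))
        (mul_nonneg (hα0 k) (hg0 k))
    -- L * ‖d‖^2 ≤ α k * ‖G (x k)‖  (after dividing by μ²)
    have h6 : L * ‖x (k + 1) - x k‖ ^ 2 ≤ α k * ‖G (x k)‖ := by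
      have h7 : μ ^ 2 * (L * ‖x (k + 1) - x k‖ ^ 2) ≤ μ ^ 2 * (α k * ‖G (x k)‖) := by
        nlinarith [h5, hαLg k, mul_nonneg (hα0 k) (hg0 k), hL.le]
      exact le_of_mul_le_mul_left h7 (pow_pos hμ 2)
    linarith [h4, h6]
  have monotone : ∀ k, ‖G (x (k + 1))‖ ≤ ‖G (x k)‖ := by
    intro k
    have := step k
    nlinarith [hα0 k, hg0 k]
  refine ⟨monotone, ?_⟩
  -- once the gradient is small, α = 1 and we halve
  have half : ∀ k, ‖G (x k)‖ ≤ μ ^ 2 / L → ‖G (x (k + 1))‖ ≤ ‖G (x k)‖ / 2 := by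
    intro k hk
    rcases eq_or_lt_of_le (hg0 k) with h | h
    · have := step k
      rw [← h] at this ⊢
      nlinarith [hα1 k, norm_nonneg (G (x (k + 1)))]
    · have h1 : 1 ≤ μ ^ 2 / (L * ‖G (x k)‖) := by
        rw [le_div_iff₀ (by positivity)]
        rw [le_div_iff₀ hL] at hk
        nlinarith
      have hαk : α k = 1 := (hα k).trans (min_eq_left h1)
      have := step k
      rw [hαk] at this
      linarith
  have decr : ∀ k, μ ^ 2 / L < ‖G (x k)‖ → ‖G (x (k + 1))‖ ≤ ‖G (x k)‖ - μ ^ 2 / (2 * L) := by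
    intro k hk
    have hgpos : 0 < ‖G (x k)‖ := lt_of_le_of_lt (by positivity) hk
    have h1 : μ ^ 2 / (L * ‖G (x k)‖) ≤ 1 := by
      rw [div_le_one (by positivity)]
      rw [div_lt_iff₀ hL] at hk
      nlinarith
    have hαk : α k = μ ^ 2 / (L * ‖G (x k)‖) := (hα k).trans (min_eq_right h1)
    have := step k
    rw [hαk] at this
    have heq2 : (1 - μ ^ 2 / (L * ‖G (x k)‖) / 2) * ‖G (x k)‖
        = ‖G (x k)‖ - μ ^ 2 / (2 * L) := by
      field_simp
    rw [heq2] at this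
    linarith
  -- after finitely many steps the gradient is small
  have reach : ∀ k : ℕ, ‖G (x k)‖ ≤ μ ^ 2 / L ∨
      ‖G (x k)‖ ≤ ‖G (x 0)‖ - k * (μ ^ 2 / (2 * L)) := by
    intro k
    induction k with
    | zero => right; simp
    | succ n ih =>
      by_cases h : ‖G (x n)‖ ≤ μ ^ 2 / L
      · left; exact (monotone n).trans h
      · push_neg at h
        rcases ih with h1 | h1
        · exact absurd h1 (not_le.mpr h)
        · right
          have := decr n h
          push_cast
          linarith
  obtain ⟨N, hN⟩ := exists_nat_gt (‖G (x 0)‖ / (μ ^ 2 / (2 * L)))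
  have hNsmall : ‖G (x N)‖ ≤ μ ^ 2 / L := by
    rcases reach N with h | h
    · exact h
    · exfalso
      have hc : (0:ℝ) < μ ^ 2 / (2 * L) := by positivity
      rw [div_lt_iff₀ hc] at hN
      linarith [hg0 N]
  have small : ∀ k, N ≤ k → ‖G (x k)‖ ≤ μ ^ 2 / L := by
    intro k hk
    induction k, hk using Nat.le_induction with
    | base => exact hNsmall
    | succ n hn ih => exact (monotone n).trans ih
  have geo : ∀ j : ℕ, ‖G (x (N + j))‖ ≤ ‖G (x N)‖ * (1 / 2 : ℝ) ^ j := by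
    intro j
    induction j with
    | zero => simp
    | succ n ih =>
      have := half (N + n) (small _ (Nat.le_add_right _ _))
      calc ‖G (x (N + (n + 1)))‖ = ‖G (x ((N + n) + 1))‖ := rfl
        _ ≤ ‖G (x (N + n))‖ / 2 := this
        _ ≤ ‖G (x N)‖ * (1 / 2 : ℝ) ^ n / 2 := by linarith
        _ = ‖G (x N)‖ * (1 / 2 : ℝ) ^ (n + 1) := by ring
  have t1 : Tendsto (fun j : ℕ => ‖G (x N)‖ * (1 / 2 : ℝ) ^ j) atTop (nhds 0) := by
    have := (tendsto_pow_atTop_nhds_zero_of_lt_one (by norm_num : (0:ℝ) ≤ 1/2)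
      (by norm_num : (1/2:ℝ) < 1)).const_mul ‖G (x N)‖
    simpa using this
  have t2 : Tendsto (fun j : ℕ => ‖G (x (N + j))‖) atTop (nhds 0) :=
    squeeze_zero (fun j => norm_nonneg _) geo t1
  have t3 : Tendsto (fun k : ℕ => ‖G (x k)‖) atTop (nhds 0) := by
    rw [← Filter.tendsto_add_atTop_iff_nat N]
    simpa [Nat.add_comm] using t2
  have hxb : ∀ k, ‖x k - xs‖ ≤ ‖G (x k)‖ / μ := by
    intro k
    have h1 := smono xs (x k)
    rw [hxs, sub_zero] at h1
    have h2 := real_inner_le_norm (G (x k)) (x k - xs)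
    rcases eq_or_lt_of_le (norm_nonneg (x k - xs)) with h | h
    · rw [← h]; positivity
    · rw [le_div_iff₀ hμ]
      nlinarith
  rw [tendsto_iff_norm_sub_tendsto_zero]
  apply squeeze_zero (fun k => norm_nonneg _) hxb
  simpa using t3.div_const μ
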